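/- Let E be a δ-ring of subsets of a nonempty set X (a ring closed under countable intersections). If A ∈ σ(E) (the σ-algebra generated by E) and F ∈ E, then A ∩ F ∈ E. -/

import Mathlib

open MeasureTheory

/-- A δ-ring: a ring of sets that is moreover closed under countable intersections. -/
def IsDeltaRing {X : Type*} (E : Set (Set X)) : Prop :=
  IsSetRing E ∧ ∀ f : ℕ → Set X, (∀ n, f n ∈ E) → (⋂ n, f n) ∈ E

/-- If `E` is a δ-ring on a nonempty set `X`, `A ∈ σ(E)` and `F ∈ E`, then `A ∩ F ∈ E`. -/
theorem inter_mem_of_measurableSet_generateFrom_of_mem_deltaRing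
    {X : Type*} [Nonempty X] (E : Set (Set X)) (hE : IsDeltaRing E)
    (A : Set X) (hA : MeasurableSet[MeasurableSpace.generateFrom E] A)
    (F : Set X) (hF : F ∈ E) : A ∩ F ∈ E := by
  let m : MeasurableSpace X :=
    { MeasurableSet' := fun A => ∀ F ∈ E, A ∩ F ∈ E
      measurableSet_empty := fun F hF => by simpa using hE.1.empty_mem
      measurableSet_compl := fun A hA F hF => by
        have : Aᶜ ∩ F = F \ (A ∩ F) := by ext x; simp [Set.mem_diff]; tauto
        rw [this]
        exact hE.1.sdiff_mem hF (hA F hF)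
      measurableSet_iUnion := fun f hf F hF => by
        have key : (⋃ n, f n) ∩ F = F \ ⋂ n, (F \ (f n ∩ F)) := by
          ext x
          simp only [Set.mem_inter_iff, Set.mem_iUnion, Set.mem_diff, Set.mem_iInter]
          constructor
          · rintro ⟨⟨n, hn⟩, hxF⟩
            exact ⟨hxF, fun h => (h n).2 ⟨hn, hxF⟩⟩
          · rintro ⟨hxF, h⟩
            push_neg at h
            obtain ⟨n, hn⟩ := h
            exact ⟨⟨n, (hn hxF).1⟩, hxF⟩
        rw [key]
        exact hE.1.sdiff_mem hF (hE.2 _ fun n => hE.1.sdiff_mem hF (hf n F hF)) }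
  have hle : MeasurableSpace.generateFrom E ≤ m := by
    apply MeasurableSpace.generateFrom_le
    intro A hA F hF
    exact hE.1.inter_mem hA hF
  exact hle A hA F hF
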